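/- Let K be a field with a nonarchimedean absolute value |·|_v, let d > m ≥ 2, and let c₁,…,c_m ∈ K satisfy: (i) max(1,|c_i|_v) = 1 for all i, and (ii) |c_i − c_j|_v = 1 for all i < j. Let λ₁,…,λ_m ∈ K, set f(z) = z^d + λ₁z^{m−1} + ⋯ + λ_m, and A_{n,i} := f^n(c_i). Then for every n ≥ 1, max(1, |A_{n,1}|_v, …, |A_{n,m}|_v) = max(1, |λ₁|_v, …, |λ_m|_v)^{d^{n−1}}. -/

import Mathlib

section Aux

variable {K : Type*} [Field K] (v : AbsoluteValue K ℝ)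
  (hna : ∀ x y : K, v (x + y) ≤ max (v x) (v y))

include hna

lemma vsum_le {ι : Type*} (s : Finset ι) (g : ι → K) (B : ℝ) (hB : 0 ≤ B)
    (h : ∀ i ∈ s, v (g i) ≤ B) : v (∑ i ∈ s, g i) ≤ B := by
  classical
  induction s using Finset.induction_on with
  | empty => simpa using hB
  | insert _ _ hx ih =>
    rename_i a s'
    rw [Finset.sum_insert hx]
    refine le_trans (hna _ _) (max_le (h a (by simp)) (ih fun i hi => h i (by simp [hi])))

lemma vsub_le (a b : K) : v (a - b) ≤ max (v a) (v b) := by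
  rw [sub_eq_add_neg]
  simpa using hna a (-b)

lemma v_add_eq (a b : K) (h : v b < v a) : v (a + b) = v a := by
  refine le_antisymm (le_trans (hna a b) (by simp [h.le])) ?_
  have h2 : v a ≤ max (v (a + b)) (v b) := by simpa using hna (a + b) (-b)
  rcases le_max_iff.1 h2 with h3 | h3
  · exact h3
  · exact absurd h3 (not_le.2 h)

lemma vdet_le {m : ℕ} (M : Matrix (Fin m) (Fin m) K) (B : ℝ) (hB : 1 ≤ B) (j : Fin m)
    (hcol : ∀ i, v (M i j) ≤ B) (hother : ∀ i k, k ≠ j → v (M i k) ≤ 1) :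
    v M.det ≤ B := by
  rw [Matrix.det_apply]
  refine vsum_le v hna _ _ B (le_trans zero_le_one hB) fun σ _ => ?_
  have hsign : ∀ x : K, v (Equiv.Perm.sign σ • x) = v x := by
    intro x
    rcases Int.units_eq_one_or (Equiv.Perm.sign σ) with h | h <;>
      simp [h, Units.smul_def]
  rw [hsign, map_prod]
  calc ∏ i, v (M (σ i) i) ≤ ∏ i, (if i = j then B else 1) := by
        refine Finset.prod_le_prod (fun i _ => v.nonneg _) fun i _ => ?_
        by_cases h : i = j
        · simpa [h] using hcol (σ j)
        · simpa [h] using hother (σ i) i h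
    _ = B := by simp

omit hna in
lemma vdet_vander {m : ℕ} (c : Fin m → K)
    (hij : ∀ i j : Fin m, i < j → v (c i - c j) = 1) :
    v (Matrix.det (Matrix.of fun i j : Fin m => c i ^ ((m - 1) - (j : ℕ)))) = 1 := by
  have hV : (Matrix.of fun i j : Fin m => c i ^ ((m - 1) - (j : ℕ)))
      = (Matrix.vandermonde c).submatrix id ⇑(Fin.revPerm) := by
    ext i j
    simp only [Matrix.of_apply, Matrix.submatrix_apply, id_eq, Matrix.vandermonde_apply,
      Fin.revPerm_apply, Fin.val_rev]
    congr 1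
    omega
  rw [hV, Matrix.det_permute', map_mul, Matrix.det_vandermonde, map_prod]
  have hs : v ((Equiv.Perm.sign (Fin.revPerm : Equiv.Perm (Fin m)) : ℤ) : K) = 1 := by
    rcases Int.units_eq_one_or (Equiv.Perm.sign (Fin.revPerm : Equiv.Perm (Fin m))) with h | h <;>
      simp [h]
  rw [hs, one_mul]
  refine Finset.prod_eq_one fun i _ => ?_
  rw [map_prod]
  exact Finset.prod_eq_one fun j hj => by
    rw [v.map_sub]; exact hij i j (Finset.mem_Ioi.1 hj)

end Aux

theorem stmt9 {K : Type*} [Field K] (v : AbsoluteValue K ℝ)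
    (hna : ∀ x y : K, v (x + y) ≤ max (v x) (v y))
    (d m : ℕ) (hm : 2 ≤ m) (hdm : m < d) (c lam : Fin m → K)
    (hc : ∀ i, max 1 (v (c i)) = 1)
    (hij : ∀ i j : Fin m, i < j → v (c i - c j) = 1)
    (f : K → K) (hf : f = fun x => x ^ d + ∑ j : Fin m, lam j * x ^ ((m - 1) - (j : ℕ))) :
    ∀ n : ℕ, 1 ≤ n →
      max 1 (⨆ i, v (f^[n] (c i))) = (max 1 (⨆ i, v (lam i))) ^ (d ^ (n - 1)) := by
  classical
  haveI : Nonempty (Fin m) := ⟨⟨0, by omega⟩⟩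
  set L : ℝ := max 1 (⨆ i, v (lam i)) with hLdef
  have hL1 : 1 ≤ L := le_max_left _ _
  have hbdd : ∀ g : Fin m → ℝ, BddAbove (Set.range g) := fun g =>
    (Set.finite_range g).bddAbove
  have hLj : ∀ j, v (lam j) ≤ L := fun j =>
    le_trans (le_ciSup (hbdd fun i => v (lam i)) j) (le_max_right _ _)
  have hcle : ∀ i, v (c i) ≤ 1 := fun i => by
    have := hc i; rw [max_eq_left_iff] at this; exact this
  -- upper bound step
  have hstep_le : ∀ (x : K) (B : ℝ), 1 ≤ B → L ≤ B → v x ≤ B → v (f x) ≤ B ^ d := by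
    intro x B hB hLB hx
    have hB0 : (0:ℝ) ≤ B := le_trans zero_le_one hB
    have h1Bd : (1:ℝ) ≤ B ^ d := one_le_pow₀ hB
    rw [hf]
    refine le_trans (hna _ _) (max_le ?_ ?_)
    · rw [map_pow]; exact pow_le_pow_left₀ (v.nonneg _) hx d
    · refine vsum_le v hna _ _ _ (le_trans zero_le_one h1Bd) fun j _ => ?_
      rw [map_mul, map_pow]
      calc v (lam j) * v x ^ ((m-1) - (j:ℕ))
          ≤ B * B ^ ((m-1) - (j:ℕ)) := by
            refine mul_le_mul (le_trans (hLj j) hLB)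
              (pow_le_pow_left₀ (v.nonneg _) hx _) (by positivity) hB0
        _ = B ^ ((m-1) - (j:ℕ) + 1) := (pow_succ' B _).symm
        _ ≤ B ^ d := pow_le_pow_right₀ hB (by omega)
  -- exact growth step
  have hstep_eq : ∀ x : K, 1 < v x → L ≤ v x → v (f x) = v x ^ d := by
    intro x hx1 hLx
    have hx0 : (0:ℝ) ≤ v x := v.nonneg _
    rw [hf]
    have htail : v (∑ j : Fin m, lam j * x ^ ((m - 1) - (j : ℕ))) ≤ v x ^ m := by
      refine vsum_le v hna _ _ _ (by positivity) fun j _ => ?_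
      rw [map_mul, map_pow]
      calc v (lam j) * v x ^ ((m-1) - (j:ℕ))
          ≤ v x * v x ^ ((m-1) - (j:ℕ)) :=
            mul_le_mul_of_nonneg_right (le_trans (hLj j) hLx) (by positivity)
        _ = v x ^ ((m-1) - (j:ℕ) + 1) := (pow_succ' (v x) _).symm
        _ ≤ v x ^ m := pow_le_pow_right₀ hx1.le (by omega)
    have hlt : v (∑ j : Fin m, lam j * x ^ ((m - 1) - (j : ℕ))) < v (x ^ d) := by
      rw [map_pow]
      exact lt_of_le_of_lt htail (pow_lt_pow_right₀ hx1 hdm)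
    rw [v_add_eq v hna _ _ hlt, map_pow]
  -- base case
  have hbase : max 1 (⨆ i, v (f (c i))) = L := by
    set B₁ : ℝ := max 1 (⨆ i, v (f (c i))) with hB₁def
    have hB₁1 : 1 ≤ B₁ := le_max_left _ _
    have hfiB : ∀ i, v (f (c i)) ≤ B₁ := fun i =>
      le_trans (le_ciSup (hbdd fun i => v (f (c i))) i) (le_max_right _ _)
    refine le_antisymm (max_le hL1 (ciSup_le fun i => ?_)) ?_
    · -- v (f (c i)) ≤ L
      rw [hf]
      refine le_trans (hna _ _) (max_le ?_ ?_)
      · rw [map_pow]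
        exact le_trans (pow_le_one₀ (v.nonneg _) (hcle i)) hL1
      · refine vsum_le v hna _ _ _ (le_trans zero_le_one hL1) fun j _ => ?_
        rw [map_mul, map_pow]
        calc v (lam j) * v (c i) ^ ((m-1) - (j:ℕ))
            ≤ L * 1 := mul_le_mul (hLj j)
              (pow_le_one₀ (v.nonneg _) (hcle i)) (by positivity)
              (le_trans zero_le_one hL1)
          _ = L := mul_one L
    · -- L ≤ B₁ via Cramer
      set V : Matrix (Fin m) (Fin m) K :=
        Matrix.of fun i j : Fin m => c i ^ ((m - 1) - (j : ℕ)) with hVdef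
      set b : Fin m → K := fun i => f (c i) - c i ^ d with hbdef
      have hmul : V.mulVec lam = b := by
        funext i
        simp only [Matrix.mulVec, dotProduct, hVdef, Matrix.of_apply, hbdef, hf]
        rw [add_sub_cancel_left]
        exact Finset.sum_congr rfl fun j _ => mul_comm _ _
      have hcram : ∀ j, V.det * lam j = (V.updateCol j b).det := by
        intro j
        have h1 : Matrix.cramer V b = V.det • lam := by
          rw [← hmul, Matrix.cramer_eq_adjugate_mulVec, Matrix.mulVec_mulVec,
            Matrix.adjugate_mul, Matrix.smul_mulVec, Matrix.one_mulVec]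
        have := congrFun h1 j
        rw [Matrix.cramer_apply] at this
        rw [this]; simp [smul_eq_mul]
      have hdet1 : v V.det = 1 := vdet_vander v c hij
      have hlamB : ∀ j, v (lam j) ≤ B₁ := by
        intro j
        have h2 : v (V.det * lam j) ≤ B₁ := by
          rw [hcram j]
          refine vdet_le v hna _ B₁ hB₁1 j ?_ ?_
          · intro i
            rw [Matrix.updateCol_self]
            refine le_trans (vsub_le v hna _ _) (max_le (hfiB i) ?_)
            rw [map_pow]
            exact le_trans (pow_le_one₀ (v.nonneg _) (hcle i)) hB₁1
          · intro i k hk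
            rw [Matrix.updateCol_ne hk]
            simp only [hVdef, Matrix.of_apply, map_pow]
            exact pow_le_one₀ (v.nonneg _) (hcle i)
        rwa [map_mul, hdet1, one_mul] at h2
      exact max_le hB₁1 (ciSup_le hlamB)
  -- induction
  intro n hn
  induction n, hn using Nat.le_induction with
  | base => simpa using hbase
  | succ n hn ih =>
    have hBn1 : 1 ≤ L ^ d ^ (n - 1) := one_le_pow₀ hL1
    have hdn : d ^ (n - 1) * d = d ^ n := by
      rw [← pow_succ]; congr 1; omega
    have hLBn : L ≤ L ^ d ^ (n - 1) := by
      calc L = L ^ 1 := (pow_one L).symm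
        _ ≤ L ^ d ^ (n - 1) := pow_le_pow_right₀ hL1 (Nat.one_le_pow _ _ (by omega))
    have hAle : ∀ i, v (f^[n] (c i)) ≤ L ^ d ^ (n - 1) := fun i => by
      rw [← ih]
      exact le_trans (le_ciSup (hbdd fun i => v (f^[n] (c i))) i) (le_max_right _ _)
    have hupper : ∀ i, v (f^[n+1] (c i)) ≤ L ^ d ^ n := by
      intro i
      rw [Function.iterate_succ_apply']
      have := hstep_le (f^[n] (c i)) (L ^ d ^ (n - 1)) hBn1 hLBn (hAle i)
      rwa [← pow_mul, hdn] at this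
    have hup : max 1 (⨆ i, v (f^[n+1] (c i))) ≤ L ^ d ^ n :=
      max_le (one_le_pow₀ hL1) (ciSup_le hupper)
    rcases eq_or_lt_of_le hL1 with hL | hL
    · -- L = 1
      have : L ^ d ^ n = 1 := by rw [← hL]; exact one_pow _
      rw [show n + 1 - 1 = n from rfl, this]
      exact le_antisymm (this ▸ hup) (le_max_left _ _)
    · -- 1 < L
      have hBngt : 1 < L ^ d ^ (n - 1) := one_lt_pow₀ hL (pow_ne_zero _ (by omega))
      have hSn : (⨆ i, v (f^[n] (c i))) = L ^ d ^ (n - 1) := by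
        rcases le_or_gt (⨆ i, v (f^[n] (c i))) 1 with h | h
        · rw [max_eq_left h] at ih
          exact absurd ih.symm (ne_of_gt hBngt)
        · rw [max_eq_right h.le] at ih
          exact ih
      obtain ⟨i, hi⟩ := Finite.exists_max fun i => v (f^[n] (c i))
      have hieq : v (f^[n] (c i)) = L ^ d ^ (n - 1) := by
        rw [← hSn]
        exact le_antisymm (le_ciSup (hbdd fun i => v (f^[n] (c i))) i) (ciSup_le hi)
      have hexact : v (f^[n+1] (c i)) = L ^ d ^ n := by
        rw [Function.iterate_succ_apply']
        rw [hstep_eq _ (hieq ▸ hBngt) (hieq ▸ hLBn), hieq, ← pow_mul, hdn]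
      refine le_antisymm (by simpa using hup) ?_
      rw [show n + 1 - 1 = n from rfl]
      calc L ^ d ^ n = v (f^[n+1] (c i)) := hexact.symm
        _ ≤ ⨆ i, v (f^[n+1] (c i)) := le_ciSup (hbdd fun i => v (f^[n+1] (c i))) i
        _ ≤ max 1 (⨆ i, v (f^[n+1] (c i))) := le_max_right _ _
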